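/- (Lemma 1) Let ℓ_l and ℓ_r be positive integers with ℓ_l = ℓ_r or ℓ_l = ℓ_r + 1. Let v_l ∈ F₂^{ℓ_l} have Hamming weight d_l and v_r ∈ F₂^{ℓ_r} have Hamming weight d_r. Then, averaging over all ℓ_l! permutations π of {0,…,ℓ_l−1}, the following polynomial identity holds in ℚ[Y]: (1/ℓ_l!) · Σ_π Y^{w_H(v_l + π·pad(v_r)) + d_r} = Σ_{k = max(0, d_l + d_r − ℓ_l)}^{min(d_l, d_r)} [ C(d_l, k)·C(ℓ_l − d_l, d_r − k) / C(ℓ_l, d_r) ] · Y^{d_l + 2d_r − 2k}. -/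

import Mathlib

open Finset

section Aux
variable {α : Type*} [Fintype α] [DecidableEq α]



/-- Permutations sending `T` onto `S` correspond to pairs of bijections. -/
def permSubtypeEquiv (T S : Finset α) :
    {π : Equiv.Perm α // ∀ x, π x ∈ S ↔ x ∈ T} ≃
      (({x // x ∈ T} ≃ {x // x ∈ S}) × ({x // ¬ x ∈ T} ≃ {x // ¬ x ∈ S})) where
  toFun := fun ⟨π, h⟩ =>
    (⟨fun x => ⟨π x, (h x).2 x.2⟩, fun y => ⟨π.symm y, (h (π.symm y)).1 (by rw [Equiv.apply_symm_apply]; exact y.2)⟩,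
      fun x => Subtype.ext (π.symm_apply_apply x),
      fun y => Subtype.ext (π.apply_symm_apply y)⟩,
     ⟨fun x => ⟨π x, fun hs => x.2 ((h x).1 hs)⟩, fun y => ⟨π.symm y, fun ht => y.2 (by simpa using (h (π.symm ↑y)).2 ht)⟩,
      fun x => Subtype.ext (π.symm_apply_apply x),
      fun y => Subtype.ext (π.apply_symm_apply y)⟩)
  invFun := fun ⟨e₁, e₂⟩ =>
    ⟨(Equiv.sumCompl (· ∈ T)).symm.trans ((e₁.sumCongr e₂).trans (Equiv.sumCompl (· ∈ S))), by
      intro x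
      by_cases hx : x ∈ T
      · simp [Equiv.sumCompl_symm_apply_of_pos hx, hx, (e₁ ⟨x, hx⟩).2]
      · simp [Equiv.sumCompl_symm_apply_of_neg hx, hx, (e₂ ⟨x, hx⟩).2]⟩
  left_inv := fun ⟨π, h⟩ => by
    ext x
    by_cases hx : x ∈ T
    · simp [Equiv.sumCompl_symm_apply_of_pos hx]
    · simp [Equiv.sumCompl_symm_apply_of_neg hx]
  right_inv := fun ⟨e₁, e₂⟩ => by
    refine Prod.ext (Equiv.ext fun x => Subtype.ext ?_) (Equiv.ext fun x => Subtype.ext ?_)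
    · show (((Equiv.sumCompl (· ∈ T)).symm.trans
          ((e₁.sumCongr e₂).trans (Equiv.sumCompl (· ∈ S)))) x : α) = (e₁ x : α)
      rw [Equiv.trans_apply, Equiv.sumCompl_symm_apply_of_pos x.2]
      simp
    · show (((Equiv.sumCompl (· ∈ T)).symm.trans
          ((e₁.sumCongr e₂).trans (Equiv.sumCompl (· ∈ S)))) x : α) = (e₂ x : α)
      rw [Equiv.trans_apply, Equiv.sumCompl_symm_apply_of_neg x.2]
      simp

lemma card_perm_maps (T S : Finset α) (h : T.card = S.card) :
    (univ.filter (fun π : Equiv.Perm α => T.image π = S)).card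
      = T.card.factorial * (Fintype.card α - T.card).factorial := by
  have key : ∀ π : Equiv.Perm α, T.image π = S ↔ ∀ x, π x ∈ S ↔ x ∈ T := by
    intro π
    constructor
    · rintro rfl x
      constructor
      · intro hx
        rw [Finset.mem_image] at hx
        obtain ⟨y, hy, hyx⟩ := hx
        rwa [← π.injective hyx]
      · intro hx; exact Finset.mem_image_of_mem _ hx
    · intro hp
      apply Finset.eq_of_subset_of_card_le
      · intro y hy
        rw [Finset.mem_image] at hy
        obtain ⟨x, hx, rfl⟩ := hy
        exact (hp x).2 hx
      · rw [Finset.card_image_of_injective _ π.injective, h]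
  rw [filter_congr (fun π _ => by rw [key π])]
  rw [← Fintype.card_subtype]
  rw [Fintype.card_congr (permSubtypeEquiv T S)]
  rw [Fintype.card_prod]
  have h1 : Fintype.card {x // x ∈ T} = T.card := Fintype.card_coe T
  have h2 : Fintype.card {x // x ∈ S} = S.card := Fintype.card_coe S
  have e1 : {x // x ∈ T} ≃ {x // x ∈ S} := Fintype.equivOfCardEq (by rw [h1, h2, h])
  have e2 : {x // ¬ x ∈ T} ≃ {x // ¬ x ∈ S} := Fintype.equivOfCardEq (by
    rw [Fintype.card_subtype_compl, Fintype.card_subtype_compl, h1, h2, h])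
  rw [Fintype.card_equiv e1, Fintype.card_equiv e2, h1,
    Fintype.card_subtype_compl, h1]



lemma card_subsets_inter (A : Finset α) (d k : ℕ) (hk : k ≤ d) :
    ((univ.powersetCard d).filter (fun S : Finset α => (S ∩ A).card = k)).card
      = A.card.choose k * (Fintype.card α - A.card).choose (d - k) := by
  rw [← Finset.card_compl, ← Finset.card_powersetCard, ← Finset.card_powersetCard,
    ← Finset.card_product]
  apply Finset.card_bij' (fun S _ => (S ∩ A, S \ A))
    (fun P _ => P.1 ∪ P.2)
  · intro S hS
    simp only [mem_filter, Finset.mem_powersetCard] at hS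
    obtain ⟨⟨hsub, hcard⟩, hk'⟩ := hS
    simp only [Finset.mem_product, Finset.mem_powersetCard]
    refine ⟨⟨inter_subset_right, hk'⟩, ?_, ?_⟩
    · intro x hx
      simp only [Finset.mem_sdiff] at hx
      simpa using hx.2
    · have := Finset.card_inter_add_card_sdiff S A
      omega
  · intro P hP
    simp only [Finset.mem_product, Finset.mem_powersetCard] at hP
    obtain ⟨⟨hP1, hP1c⟩, hP2, hP2c⟩ := hP
    have hdisj : Disjoint P.1 P.2 := by
      refine Finset.disjoint_left.2 fun x hx1 hx2 => ?_
      have := hP2 hx2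
      simp only [Finset.mem_compl] at this
      exact this (hP1 hx1)
    simp only [mem_filter, Finset.mem_powersetCard]
    refine ⟨⟨Finset.subset_univ _, ?_⟩, ?_⟩
    · rw [Finset.card_union_of_disjoint hdisj, hP1c, hP2c]; omega
    · rw [Finset.union_inter_distrib_right]
      have h1 : P.1 ∩ A = P.1 := Finset.inter_eq_left.2 hP1
      have h2 : P.2 ∩ A = ∅ := by
        refine Finset.eq_empty_of_forall_notMem fun x hx => ?_
        simp only [Finset.mem_inter] at hx
        have := hP2 hx.1
        simp only [Finset.mem_compl] at this
        exact this hx.2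
      rw [h1, h2, Finset.union_empty, hP1c]
  · intro S hS
    rw [Finset.union_comm]
    exact Finset.sdiff_union_inter S A
  · intro P hP
    simp only [Finset.mem_product, Finset.mem_powersetCard] at hP
    obtain ⟨⟨hP1, hP1c⟩, hP2, hP2c⟩ := hP
    have h1 : (P.1 ∪ P.2) ∩ A = P.1 := by
      rw [Finset.union_inter_distrib_right, Finset.inter_eq_left.2 hP1]
      have h2 : P.2 ∩ A = ∅ := by
        refine Finset.eq_empty_of_forall_notMem fun x hx => ?_
        simp only [Finset.mem_inter] at hx
        have := hP2 hx.1
        simp only [Finset.mem_compl] at this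
        exact this hx.2
      rw [h2, Finset.union_empty]
    have h2 : (P.1 ∪ P.2) \ A = P.2 := by
      rw [Finset.union_sdiff_distrib]
      have ha : P.1 \ A = ∅ := Finset.sdiff_eq_empty_iff_subset.2 hP1
      have hb : P.2 \ A = P.2 := by
        refine Finset.sdiff_eq_self_iff_disjoint.2 ?_
        refine Finset.disjoint_left.2 fun x hx2 hxa => ?_
        have := hP2 hx2
        simp only [Finset.mem_compl] at this
        exact this hxa
      rw [ha, hb, Finset.empty_union]
    rw [h1, h2]

-- hamming lemma
lemma hamming_add (u v : α → ZMod 2) :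
    hammingNorm (u + v) + 2 * ((univ.filter (fun i => u i ≠ 0)) ∩ (univ.filter (fun i => v i ≠ 0))).card
      = hammingNorm u + hammingNorm v := by
  classical
  have key : ∀ a b : ZMod 2, a + b ≠ 0 ↔ ((a ≠ 0 ∧ b = 0) ∨ (a = 0 ∧ b ≠ 0)) := by decide
  set A := univ.filter (fun i => u i ≠ 0)
  set B := univ.filter (fun i => v i ≠ 0)
  have hsupp : univ.filter (fun i => (u + v) i ≠ 0) = (A \ B) ∪ (B \ A) := by
    ext i
    simp only [A, B, mem_filter, mem_univ, true_and, Finset.mem_union, Finset.mem_sdiff,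
      Pi.add_apply, key (u i) (v i)]
    tauto
  show (univ.filter (fun i => (u + v) i ≠ 0)).card + _ = (A.card + B.card)
  rw [hsupp]
  rw [Finset.card_union_of_disjoint (Finset.sdiff_disjoint.mono_right Finset.sdiff_subset)]
  have h1 := Finset.card_sdiff_add_card_inter A B
  have h2 := Finset.card_sdiff_add_card_inter B A
  rw [Finset.inter_comm B A] at h2
  omega

end Aux


/-- `pad l r v` extends `v ∈ 𝔽₂^r` to a vector in `𝔽₂^l` by appending zero coordinates.
When `l = r` it is `v` itself; when `l = r + 1` it is `v` extended by one zero. -/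
def pad (l r : ℕ) (v : Fin r → ZMod 2) : Fin l → ZMod 2 :=
  fun i => if h : (i : ℕ) < r then v ⟨i, h⟩ else 0

open Polynomial in
/-- **Lemma 1.** For `v_l ∈ 𝔽₂^{ℓ_l}` of weight `d_l` and `v_r ∈ 𝔽₂^{ℓ_r}`
of weight `d_r` (with `ℓ_l = ℓ_r` or `ℓ_l = ℓ_r + 1`), averaging over all `ℓ_l!`
permutations `π`:
`(1/ℓ_l!) Σ_π Y^{w_H(v_l + π·pad(v_r)) + d_r}
  = Σ_k [C(d_l,k) C(ℓ_l−d_l, d_r−k) / C(ℓ_l,d_r)] Y^{d_l+2d_r−2k}`,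
with `k` ranging from `max(0, d_l+d_r−ℓ_l)` to `min(d_l, d_r)`. -/
theorem average_weight_distribution (ll lr : ℕ) (hll : 0 < ll) (hlr : 0 < lr)
    (hcase : ll = lr ∨ ll = lr + 1)
    (vl : Fin ll → ZMod 2) (vr : Fin lr → ZMod 2) (dl dr : ℕ)
    (hdl : hammingNorm vl = dl) (hdr : hammingNorm vr = dr) :
    (1 / (ll.factorial : ℚ)) •
        ∑ π : Equiv.Perm (Fin ll),
          (X : ℚ[X]) ^ (hammingNorm (vl + fun i => pad ll lr vr (π⁻¹ i)) + dr)
      = ∑ k ∈ Finset.Icc (dl + dr - ll) (min dl dr),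
          ((dl.choose k * (ll - dl).choose (dr - k) : ℚ) / (ll.choose dr : ℚ)) •
            (X : ℚ[X]) ^ (dl + 2 * dr - 2 * k) := by
  classical
  have hlrll : lr ≤ ll := by omega
  set w : Fin ll → ZMod 2 := pad ll lr vr with hw
  set A : Finset (Fin ll) := univ.filter (fun i => vl i ≠ 0) with hAdef
  set T : Finset (Fin ll) := univ.filter (fun i => w i ≠ 0) with hTdef
  have hA : A.card = dl := by rw [← hdl]; rfl
  have hT : T.card = dr := by
    rw [← hdr]
    show _ = (univ.filter (fun i => vr i ≠ 0)).card
    apply Finset.card_bij (fun (i : Fin ll) (hi : i ∈ T) => (⟨i.1, by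
      by_contra hc
      have : w i = 0 := by simp [hw, pad, hc]
      simp [hTdef, this] at hi⟩ : Fin lr))
    · intro i hi
      simp only [hTdef, mem_filter, mem_univ, true_and] at hi
      simp only [mem_filter, mem_univ, true_and]
      intro hc
      apply hi
      simp only [hw, pad]
      split
      · convert hc using 2
      · rfl
    · intro i hi j hj hij
      simp only [Fin.mk.injEq] at hij
      exact Fin.ext hij
    · intro j hj
      simp only [mem_filter, mem_univ, true_and] at hj
      refine ⟨⟨j.1, lt_of_lt_of_le j.2 hlrll⟩, ?_, rfl⟩
      simp only [hTdef, mem_filter, mem_univ, true_and, hw, pad, j.2]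
      simpa using hj
  have hdlll : dl ≤ ll := by
    rw [← hA]
    simpa using Finset.card_le_univ A
  have hdrll : dr ≤ ll := by
    rw [← hT]
    simpa using Finset.card_le_univ T
  -- support of permuted vector
  have hsupp : ∀ π : Equiv.Perm (Fin ll),
      univ.filter (fun i => (fun i => w (π⁻¹ i)) i ≠ 0) = T.image π := by
    intro π
    ext i
    simp only [mem_filter, mem_univ, true_and, Finset.mem_image, hTdef]
    constructor
    · intro h
      exact ⟨π⁻¹ i, by simpa using h, by simp⟩
    · rintro ⟨a, ha, rfl⟩
      simpa using ha
  set K : Equiv.Perm (Fin ll) → ℕ := fun π => ((T.image π) ∩ A).card with hK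
  have hKle : ∀ π, K π ∈ Finset.Icc (dl + dr - ll) (min dl dr) := by
    intro π
    have himg : (T.image π).card = dr := by
      rw [Finset.card_image_of_injective _ π.injective, hT]
    have h1 : K π ≤ dr := by
      rw [← himg]; exact Finset.card_le_card inter_subset_left
    have h2 : K π ≤ dl := by
      rw [← hA]; exact Finset.card_le_card inter_subset_right
    have h3 := Finset.card_union_add_card_inter (T.image π) A
    have h4 : ((T.image π) ∪ A).card ≤ ll := by
      simpa using Finset.card_le_univ ((T.image π) ∪ A)
    have h5 : K π = ((T.image π) ∩ A).card := rfl
    simp only [Finset.mem_Icc]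
    omega
  have hexp : ∀ π : Equiv.Perm (Fin ll),
      hammingNorm (vl + fun i => w (π⁻¹ i)) + dr = dl + 2 * dr - 2 * K π := by
    intro π
    have := hamming_add vl (fun i => w (π⁻¹ i))
    rw [show (univ.filter (fun i => vl i ≠ 0)) = A from rfl, hsupp π] at this
    have himg : (T.image π).card = dr := by
      rw [Finset.card_image_of_injective _ π.injective, hT]
    have hnorm2 : hammingNorm (fun i => w (π⁻¹ i)) = dr := by
      show (univ.filter _).card = dr
      rw [hsupp π, himg]
    rw [hdl, hnorm2, Finset.inter_comm] at this
    have hk := hKle π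
    simp only [Finset.mem_Icc] at hk
    simp only [hK]
    omega
  have hcount : ∀ k ∈ Finset.Icc (dl + dr - ll) (min dl dr),
      (univ.filter (fun π : Equiv.Perm (Fin ll) => K π = k)).card
        = dl.choose k * (ll - dl).choose (dr - k) * (dr.factorial * (ll - dr).factorial) := by
    intro k hk
    simp only [Finset.mem_Icc] at hk
    have hkdr : k ≤ dr := le_trans hk.2 (min_le_right _ _)
    have hmaps : ∀ π ∈ univ.filter (fun π : Equiv.Perm (Fin ll) => K π = k),
        T.image ⇑π ∈ (univ.powersetCard dr).filter (fun S => (S ∩ A).card = k) := by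
      intro π hπ
      simp only [Finset.mem_filter, Finset.mem_powersetCard_univ]
      refine ⟨by rw [Finset.card_image_of_injective _ π.injective, hT], ?_⟩
      simpa [hK] using (Finset.mem_filter.1 hπ).2
    rw [Finset.card_eq_sum_card_fiberwise hmaps]
    have hfiber : ∀ S ∈ (univ.powersetCard dr).filter (fun S => (S ∩ A).card = k),
        ((univ.filter (fun π : Equiv.Perm (Fin ll) => K π = k)).filter
            (fun π : Equiv.Perm (Fin ll) => T.image ⇑π = S)).card
          = dr.factorial * (ll - dr).factorial := by
      intro S hS
      simp only [Finset.mem_filter, Finset.mem_powersetCard_univ] at hS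
      have heq : (univ.filter (fun π : Equiv.Perm (Fin ll) => K π = k)).filter
            (fun π : Equiv.Perm (Fin ll) => T.image ⇑π = S)
          = univ.filter (fun π : Equiv.Perm (Fin ll) => T.image ⇑π = S) := by
        ext π
        simp only [Finset.mem_filter, Finset.mem_univ, true_and]
        constructor
        · rintro ⟨-, h⟩; exact h
        · intro h; exact ⟨by simp [hK, h, hS.2], h⟩
      rw [heq, card_perm_maps T S (by rw [hT, hS.1]), hT, Fintype.card_fin]
    rw [Finset.sum_congr rfl hfiber, Finset.sum_const, smul_eq_mul,
      card_subsets_inter A dr k hkdr, hA, Fintype.card_fin]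
  rw [← Finset.sum_fiberwise_of_maps_to (fun π _ => hKle π)
    (fun π => (X : ℚ[X]) ^ (hammingNorm (vl + fun i => w (π⁻¹ i)) + dr))]
  rw [Finset.smul_sum]
  apply Finset.sum_congr rfl
  intro k hk
  have hinner : ∑ π ∈ univ.filter (fun π : Equiv.Perm (Fin ll) => K π = k),
        (X : ℚ[X]) ^ (hammingNorm (vl + fun i => w (π⁻¹ i)) + dr)
      = (univ.filter (fun π : Equiv.Perm (Fin ll) => K π = k)).card •
          (X : ℚ[X]) ^ (dl + 2 * dr - 2 * k) := by
    rw [← Finset.sum_const]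
    apply Finset.sum_congr rfl
    intro π hπ
    simp only [Finset.mem_filter] at hπ
    rw [hexp π, hπ.2]
  rw [hinner, hcount k hk]
  rw [← Nat.cast_smul_eq_nsmul ℚ, smul_smul]
  congr 1
  have hfact : ll.choose dr * (dr.factorial * (ll - dr).factorial) = ll.factorial := by
    rw [← Nat.choose_mul_factorial_mul_factorial hdrll]; ring
  have hf : (ll.factorial : ℚ) = (ll.choose dr : ℚ) * (dr.factorial * (ll - dr).factorial) := by
    exact_mod_cast hfact.symm
  have h1 : (ll.choose dr : ℚ) ≠ 0 := Nat.cast_ne_zero.2 (Nat.choose_pos hdrll).ne'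
  have h2 : (dr.factorial : ℚ) ≠ 0 := by exact_mod_cast dr.factorial_ne_zero
  have h3 : ((ll - dr).factorial : ℚ) ≠ 0 := by exact_mod_cast (ll - dr).factorial_ne_zero
  rw [hf]
  push_cast
  field_simp
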